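/- If the dither d is uniformly distributed over the basic cell P₀ of a lattice L in ℝ^L and the quantizer is not overloaded for input x (i.e., Q_L(x + d) always lies in the truncated lattice), then the SDQ error e = Q_L(x + d) − d − x is uniformly distributed over −P₀ (equivalently, over P₀ up to point symmetry), independently of x; in particular E[e] = 0 when P₀ is point-symmetric about the origin. -/

import Mathlib

open MeasureTheory

noncomputable section

/-- The lattice generated by `G`: all integer combinations of the columns of `G`. -/
def latticePts (L : ℕ) (G : Matrix (Fin L) (Fin L) ℝ) : Set (EuclideanSpace ℝ (Fin L)) :=
  {x | ∃ l : Fin L → ℤ, ∀ i, x i = ∑ j, G i j * (l j : ℝ)}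

/-- The basic (Voronoi) cell `P₀` of the lattice: points whose nearest lattice point is `0`. -/
def basicCell (L : ℕ) (G : Matrix (Fin L) (Fin L) ℝ) : Set (EuclideanSpace ℝ (Fin L)) :=
  {x | ∀ z ∈ latticePts L G, ‖x‖ ≤ ‖x - z‖}

namespace SDQAux

variable {L : ℕ} {G : Matrix (Fin L) (Fin L) ℝ}

/-- The lattice point with coordinates `l`. -/
def vlat (G : Matrix (Fin L) (Fin L) ℝ) (l : Fin L → ℤ) : EuclideanSpace ℝ (Fin L) :=
  WithLp.toLp 2 (fun i => ∑ j, G i j * (l j : ℝ))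

lemma mem_latticePts_iff {z : EuclideanSpace ℝ (Fin L)} :
    z ∈ latticePts L G ↔ ∃ l, z = vlat G l := by
  constructor
  · rintro ⟨l, h⟩; exact ⟨l, by ext i; exact h i⟩
  · rintro ⟨l, rfl⟩; exact ⟨l, fun i => rfl⟩

lemma vlat_injective (hG : IsUnit G.det) : Function.Injective (vlat G) := by
  intro l l' h
  have h2 : G.mulVec (fun j => (l j : ℝ)) = G.mulVec (fun j => (l' j : ℝ)) := by
    funext i
    simpa [vlat, Matrix.mulVec, dotProduct, PiLp.toLp_apply] using congrArg (fun z => z i) h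
  have h3 := Matrix.mulVec_injective_iff_isUnit.mpr
    ((Matrix.isUnit_iff_isUnit_det G).mpr hG) h2
  funext j
  exact_mod_cast congrFun h3 j

lemma lat_sub {a b : EuclideanSpace ℝ (Fin L)}
    (ha : a ∈ latticePts L G) (hb : b ∈ latticePts L G) : a - b ∈ latticePts L G := by
  obtain ⟨l, hl⟩ := ha
  obtain ⟨m, hm⟩ := hb
  refine ⟨l - m, fun i => ?_⟩
  have hab : (a - b) i = a i - b i := rfl
  rw [hab, hl i, hm i, ← Finset.sum_sub_distrib]
  refine Finset.sum_congr rfl fun j _ => ?_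
  push_cast [Pi.sub_apply]
  ring

lemma lat_zero : (0 : EuclideanSpace ℝ (Fin L)) ∈ latticePts L G := by
  refine ⟨0, fun i => ?_⟩
  simp [PiLp.zero_apply]

lemma lat_neg {a : EuclideanSpace ℝ (Fin L)} (ha : a ∈ latticePts L G) :
    -a ∈ latticePts L G := by
  simpa using lat_sub lat_zero ha

lemma lat_add {a b : EuclideanSpace ℝ (Fin L)}
    (ha : a ∈ latticePts L G) (hb : b ∈ latticePts L G) : a + b ∈ latticePts L G := by
  simpa using lat_sub ha (lat_neg hb)

lemma basicCell_closed : IsClosed (basicCell L G) := by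
  have : basicCell L G = ⋂ z ∈ latticePts L G, {y : EuclideanSpace ℝ (Fin L) | ‖y‖ ≤ ‖y - z‖} := by
    ext y; simp [basicCell, Set.mem_iInter]
  rw [this]
  refine isClosed_biInter fun z _ => ?_
  exact isClosed_le continuous_norm ((continuous_id.sub continuous_const).norm)

lemma basicCell_measurable : MeasurableSet (basicCell L G) :=
  basicCell_closed.measurableSet

/-- The perpendicular bisector set is Lebesgue-null. -/
lemma perp_null {v w : EuclideanSpace ℝ (Fin L)} (h : v ≠ w) :
    volume {u : EuclideanSpace ℝ (Fin L) | ‖u - v‖ = ‖u - w‖} = 0 := by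
  have hset : {u : EuclideanSpace ℝ (Fin L) | ‖u - v‖ = ‖u - w‖}
      = (AffineSubspace.perpBisector v w : Set (EuclideanSpace ℝ (Fin L))) := by
    ext u
    simp [AffineSubspace.mem_perpBisector_iff_dist_eq, dist_eq_norm]
  rw [hset]
  exact Measure.addHaar_affineSubspace volume _ (by simpa using h)

/-- Two residues of the same point w.r.t. lattice translates are equidistant. -/
lemma norm_eq_of_sub_mem {u v w : EuclideanSpace ℝ (Fin L)}
    (hvw : v - w ∈ latticePts L G)
    (h1 : u - v ∈ basicCell L G) (h2 : u - w ∈ basicCell L G) : ‖u - v‖ = ‖u - w‖ := by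
  have e1 : u - v - (w - v) = u - w := by abel
  have e2 : u - w - (v - w) = u - v := by abel
  have hwv : w - v ∈ latticePts L G := by
    have := lat_neg hvw; rwa [neg_sub] at this
  have l1 := h1 (w - v) hwv
  have l2 := h2 (v - w) hvw
  rw [e1] at l1
  rw [e2] at l2
  exact le_antisymm l1 l2

end SDQAux

open SDQAux

/-- Crypto-lemma / dithered quantization (Theorem 1, error distribution): if the dither
`d` is uniform over the basic cell `P₀` and the quantizer is not overloaded for input
`x`, then the SDQ error `e = Q(x + d) − d − x` is uniformly distributed over `−P₀`,
independently of `x`; in particular `E[e] = 0` when `P₀` is point-symmetric. -/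
theorem sdq_error_uniform
    {Ω : Type*} [MeasurableSpace Ω] (μ : Measure Ω) [IsProbabilityMeasure μ]
    (L : ℕ) (hL : 0 < L) (G : Matrix (Fin L) (Fin L) ℝ) (hG : IsUnit G.det)
    (Q : EuclideanSpace ℝ (Fin L) → EuclideanSpace ℝ (Fin L))
    (hQmem : ∀ y, Q y ∈ latticePts L G)
    (hQnear : ∀ y, ∀ z ∈ latticePts L G, ‖y - Q y‖ ≤ ‖y - z‖)
    (hQmeas : Measurable Q)
    (hsym : ∀ y, y ∈ basicCell L G ↔ -y ∈ basicCell L G)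
    (hnull : volume (frontier (basicCell L G)) = 0)
    (d : Ω → EuclideanSpace ℝ (Fin L)) (hdmeas : Measurable d)
    (hlaw : Measure.map d μ
      = (volume (basicCell L G))⁻¹ • volume.restrict (basicCell L G))
    (x : EuclideanSpace ℝ (Fin L)) (γ : ℝ) (hγ : 0 < γ)
    (hno_overload : ∀ ω, ‖Q (x + d ω)‖ ≤ γ) :
    Measure.map (fun ω => Q (x + d ω) - d ω - x) μ
        = (volume (basicCell L G))⁻¹
            • volume.restrict {y : EuclideanSpace ℝ (Fin L) | -y ∈ basicCell L G}
      ∧ ∫ ω, (Q (x + d ω) - d ω - x) ∂μ = 0 := by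
  classical
  set P : Set (EuclideanSpace ℝ (Fin L)) := basicCell L G with hPdef
  have hPm : MeasurableSet P := basicCell_measurable
  -- point symmetry as a set equality
  have hPneg : {y : EuclideanSpace ℝ (Fin L) | -y ∈ P} = P := by
    ext y; exact (hsym y).symm
  -- the residue of any point lies in P
  have hres : ∀ y : EuclideanSpace ℝ (Fin L), y - Q y ∈ P := by
    intro y z hz
    have := hQnear y (Q y + z) (lat_add (hQmem y) hz)
    rwa [← sub_sub] at this
  -- the error map
  set f : EuclideanSpace ℝ (Fin L) → EuclideanSpace ℝ (Fin L) := fun y => Q (x + y) - y - x with hfdef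
  have hf : Measurable f := by
    exact ((hQmeas.comp (measurable_const.add measurable_id)).sub measurable_id).sub
      measurable_const
  -- the main crypto-lemma step
  have main : Measure.map f (volume.restrict P) = volume.restrict P := by
    refine Measure.ext fun A hA => ?_
    rw [Measure.map_apply hf hA, Measure.restrict_apply hA, Measure.restrict_apply (hf hA)]
    -- tiles
    set v : (Fin L → ℤ) → EuclideanSpace ℝ (Fin L) := vlat G with hvdef
    have hvinj : Function.Injective v := vlat_injective hG
    set S : (Fin L → ℤ) → Set (EuclideanSpace ℝ (Fin L)) :=
      fun l => P ∩ ((fun y => Q (x + y)) ⁻¹' {v l}) ∩ (f ⁻¹' A) with hSdef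
    set T : (Fin L → ℤ) → Set (EuclideanSpace ℝ (Fin L)) :=
      fun l => P ∩ ((fun y => x + y - v l) ⁻¹' P) ∩ ((fun y => v l - y - x) ⁻¹' A) with hTdef
    set B : Set (EuclideanSpace ℝ (Fin L)) := P ∩ ((fun u : EuclideanSpace ℝ (Fin L) => -u) ⁻¹' A) with hBdef
    set W : (Fin L → ℤ) → Set (EuclideanSpace ℝ (Fin L)) :=
      fun l => B ∩ ((fun u => u - (x - v l)) ⁻¹' P) with hWdef
    have hSm : ∀ l, MeasurableSet (S l) := fun l =>
      (hPm.inter ((hQmeas.comp (measurable_const.add measurable_id))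
        (measurableSet_singleton (v l)))).inter (hf hA)
    have hBm : MeasurableSet B := hPm.inter (measurable_neg hA)
    have hWm : ∀ l, MeasurableSet (W l) := fun l =>
      hBm.inter ((measurable_id.sub measurable_const) hPm)
    -- (1) decomposition of the preimage
    have h1 : f ⁻¹' A ∩ P = ⋃ l, S l := by
      ext y
      constructor
      · rintro ⟨hyA, hyP⟩
        obtain ⟨l, hl⟩ := mem_latticePts_iff.mp (hQmem (x + y))
        rw [← hvdef] at hl
        exact Set.mem_iUnion.mpr ⟨l, ⟨hyP, hl⟩, hyA⟩
      · rintro ⟨_, ⟨l, rfl⟩, ⟨⟨hyP, _⟩, hyA⟩⟩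
        exact ⟨hyA, hyP⟩
    -- (2) disjointness of the S l
    have hSdisj : Pairwise (Function.onFun Disjoint S) := by
      intro l l' hll'
      refine Set.disjoint_left.mpr fun y hy hy' => hll' ?_
      have e1 : Q (x + y) = v l := hy.1.2
      have e2 : Q (x + y) = v l' := hy'.1.2
      exact hvinj (e1 ▸ e2)
    -- (3) S l and T l have the same measure
    have h3 : ∀ l, volume (T l) = volume (S l) := by
      intro l
      have hST : S l ⊆ T l := by
        rintro y ⟨⟨hyP, hQy⟩, hyA⟩
        have hQy' : Q (x + y) = v l := hQy
        refine ⟨⟨hyP, ?_⟩, ?_⟩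
        · show x + y - v l ∈ P
          rw [← hQy']
          exact hres (x + y)
        · show v l - y - x ∈ A
          have hfy : f y = v l - y - x := by
            show Q (x + y) - y - x = v l - y - x
            rw [hQy']
          rwa [← hfy]
      have hnullTS : volume (T l \ S l) = 0 := by
        have hsub : T l \ S l ⊆
            ⋃ (l' : {l' : Fin L → ℤ // v l' ≠ v l}),
              {y : EuclideanSpace ℝ (Fin L) | ‖y - (v l - x)‖ = ‖y - (v l'.1 - x)‖} := by
          rintro y ⟨⟨⟨hyP, hyP'⟩, hyA⟩, hyNS⟩
          have hQne : Q (x + y) ≠ v l := by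
            intro hq
            refine hyNS ⟨⟨hyP, hq⟩, ?_⟩
            show f y ∈ A
            have hfy : f y = v l - y - x := by
              show Q (x + y) - y - x = v l - y - x
              rw [hq]
            rwa [hfy]
          obtain ⟨l', hl'⟩ := mem_latticePts_iff.mp (hQmem (x + y))
          rw [← hvdef] at hl'
          have hl'ne : v l' ≠ v l := fun h => hQne (hl'.trans h)
          refine Set.mem_iUnion.mpr ⟨⟨l', hl'ne⟩, ?_⟩
          have hres' : (x + y) - v l' ∈ P := by rw [← hl']; exact hres (x + y)
          have heq : ‖(x + y) - v l‖ = ‖(x + y) - v l'‖ :=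
            norm_eq_of_sub_mem (lat_sub (mem_latticePts_iff.mpr ⟨l, rfl⟩)
              (mem_latticePts_iff.mpr ⟨l', rfl⟩)) hyP' hres'
          have e1 : x + y - v l = y - (v l - x) := by abel
          have e2 : x + y - v l' = y - (v l' - x) := by abel
          show ‖y - (v l - x)‖ = ‖y - (v l' - x)‖
          rw [← e1, ← e2]
          exact heq
        refine measure_mono_null hsub (measure_iUnion_null fun l' => perp_null ?_)
        intro hvv
        exact l'.2 (by simpa using (congrArg (· + x) hvv).symm)
      refine le_antisymm ?_ (measure_mono hST)
      calc volume (T l) = volume (S l ∪ (T l \ S l)) := by rw [Set.union_diff_cancel hST]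
        _ ≤ volume (S l) + volume (T l \ S l) := measure_union_le _ _
        _ = volume (S l) := by rw [hnullTS, add_zero]
    -- (4) T l is a translate of W l
    have h4 : ∀ l, volume (T l) = volume (W l) := by
      intro l
      have hTp : T l = (fun y => y + (x - v l)) ⁻¹' (W l) := by
        ext y
        have e1 : y + (x - v l) = x + y - v l := by abel
        have e2 : -(x + y - v l) = v l - y - x := by abel
        have e3 : x + y - v l - (x - v l) = y := by abel
        simp only [hWdef, hBdef, Set.mem_preimage, Set.mem_inter_iff, e1, e2, e3, hTdef,
          Set.mem_setOf_eq]
        tauto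
      rw [hTp]
      exact measure_preimage_add_right volume _ _
    -- (5) the W l are a.e. disjoint and cover B
    have hWae : Pairwise (Function.onFun (AEDisjoint volume) W) := by
      intro l l' hll'
      have hsub : W l ∩ W l' ⊆ {u : EuclideanSpace ℝ (Fin L) | ‖u - (x - v l)‖ = ‖u - (x - v l')‖} := by
        rintro u ⟨⟨_, huP⟩, ⟨_, huP'⟩⟩
        refine norm_eq_of_sub_mem ?_ huP huP'
        have e : (x - v l) - (x - v l') = v l' - v l := by abel
        rw [e]
        exact lat_sub (mem_latticePts_iff.mpr ⟨l', rfl⟩) (mem_latticePts_iff.mpr ⟨l, rfl⟩)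
      refine measure_mono_null hsub (perp_null ?_)
      intro hvv
      refine hll' (hvinj ?_)
      simpa using congrArg (x - ·) hvv
    have hWcover : ⋃ l, W l = B := by
      ext u
      constructor
      · rintro ⟨_, ⟨l, rfl⟩, hu⟩
        exact hu.1
      · intro huB
        obtain ⟨l₀, hl₀⟩ := mem_latticePts_iff.mp (hQmem (u - x))
        rw [← hvdef] at hl₀
        refine Set.mem_iUnion.mpr ⟨-l₀, huB, ?_⟩
        show u - (x - v (-l₀)) ∈ P
        have hvneg : v (-l₀) = -(v l₀) := by
          ext i
          simp only [hvdef, vlat, PiLp.neg_apply, PiLp.toLp_apply]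
          rw [← Finset.sum_neg_distrib]
          refine Finset.sum_congr rfl fun j _ => ?_
          simp [Pi.neg_apply]
        have e : u - (x - v (-l₀)) = (u - x) - Q (u - x) := by
          rw [hvneg, ← hl₀]; abel
        rw [e]
        exact hres (u - x)
    -- (6) B and A ∩ P have the same measure
    have h6 : volume B = volume (A ∩ P) := by
      have hBp : B = (fun u : EuclideanSpace ℝ (Fin L) => -u) ⁻¹' (A ∩ P) := by
        ext u
        simp only [hBdef, Set.mem_inter_iff, Set.mem_preimage]
        constructor
        · rintro ⟨huP, huA⟩; exact ⟨huA, (hsym u).mp huP⟩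
        · rintro ⟨huA, huP⟩; exact ⟨(hsym u).mpr huP, huA⟩
      rw [hBp]
      exact Measure.measure_preimage_neg volume _
    -- assemble
    calc volume (f ⁻¹' A ∩ P) = volume (⋃ l, S l) := by rw [h1]
      _ = ∑' l, volume (S l) := measure_iUnion hSdisj hSm
      _ = ∑' l, volume (T l) := by exact tsum_congr fun l => (h3 l).symm
      _ = ∑' l, volume (W l) := tsum_congr h4
      _ = volume (⋃ l, W l) :=
        (measure_iUnion₀ hWae fun l => (hWm l).nullMeasurableSet).symm
      _ = volume B := by rw [hWcover]
      _ = volume (A ∩ P) := h6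
  -- part 1
  have he : (fun ω => Q (x + d ω) - d ω - x) = f ∘ d := rfl
  have hmap : Measure.map (fun ω => Q (x + d ω) - d ω - x) μ
      = (volume P)⁻¹ • volume.restrict P := by
    rw [he, ← Measure.map_map hf hdmeas, hlaw, Measure.map_smul, main]
  have hgoal1 : Measure.map (fun ω => Q (x + d ω) - d ω - x) μ
      = (volume P)⁻¹
          • volume.restrict {y : EuclideanSpace ℝ (Fin L) | -y ∈ P} := by
    rw [hmap, hPneg]
  -- part 2
  refine ⟨hgoal1, ?_⟩
  have hem : Measurable (fun ω => Q (x + d ω) - d ω - x) := hf.comp hdmeas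
  have hνneg : Measure.map (fun y : EuclideanSpace ℝ (Fin L) => -y)
      ((volume P)⁻¹ • volume.restrict P) = (volume P)⁻¹ • volume.restrict P := by
    rw [Measure.map_smul]
    congr 1
    refine Measure.ext fun A hA => ?_
    rw [Measure.map_apply measurable_neg hA, Measure.restrict_apply (measurable_neg hA),
      Measure.restrict_apply hA]
    have : (fun y : EuclideanSpace ℝ (Fin L) => -y) ⁻¹' A ∩ P = (fun y : EuclideanSpace ℝ (Fin L) => -y) ⁻¹' (A ∩ P) := by
      ext u
      simp only [Set.mem_inter_iff, Set.mem_preimage]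
      exact and_congr_right fun _ => (hsym u)
    rw [this]
    exact Measure.measure_preimage_neg volume _
  have hint : ∫ ω, (Q (x + d ω) - d ω - x) ∂μ
      = ∫ y, y ∂((volume P)⁻¹ • volume.restrict P) := by
    rw [← hmap]
    exact (integral_map hem.aemeasurable aestronglyMeasurable_id).symm
  set a : EuclideanSpace ℝ (Fin L) := ∫ y, y ∂((volume P)⁻¹ • volume.restrict P) with ha
  have haa : a = -a := by
    have step : ∫ y, y ∂(Measure.map (fun y : EuclideanSpace ℝ (Fin L) => -y)
          ((volume P)⁻¹ • volume.restrict P))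
        = ∫ y, -y ∂((volume P)⁻¹ • volume.restrict P) :=
      integral_map measurable_neg.aemeasurable aestronglyMeasurable_id
    calc a = ∫ y, y ∂(Measure.map (fun y : EuclideanSpace ℝ (Fin L) => -y)
          ((volume P)⁻¹ • volume.restrict P)) := by rw [hνneg]
      _ = ∫ y, -y ∂((volume P)⁻¹ • volume.restrict P) := step
      _ = -a := by rw [integral_neg]
  have h2a : (2 : ℝ) • a = 0 := by
    rw [two_smul]
    nth_rewrite 1 [haa]
    exact neg_add_cancel a
  have haz : a = 0 := by
    rcases smul_eq_zero.mp h2a with h | h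
    · norm_num at h
    · exact h
  rw [hint, haz]
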